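/- arXiv:1910.13311 — 2 statements merged into one kernel-verified Lean document; each statement's English description precedes it below -/
import Mathlib

section
/- Let Ω be an open bounded subset of ℝ^N with Lipschitz boundary, let p > 1, λ ≥ 1, and γ ≥ 0. Then there exists no function u ∈ W^{1,p}_0(Ω) ∩ L^∞(Ω) with u^{−γ} ∈ L¹_loc(Ω) satisfying ∫_Ω |∇u|^{p−2}∇u·∇φ = λ∫_Ω (|∇u|^p/u) φ + ∫_Ω φ/u^γ for every φ ∈ W^{1,p}_0(Ω) ∩ L^∞(Ω); i.e., the problem −Δ_p u = λ|∇u|^p/u + u^{−γ}, u = 0 on ∂Ω, has no weak solution when λ ≥ 1. -/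
open MeasureTheory Filter Topology Set Metric
open scoped ENNReal NNReal Topology

noncomputable section

/-- Euclidean space `ℝ^N`. -/
abbrev Euc (N : ℕ) : Type := EuclideanSpace ℝ (Fin N)

variable {N : ℕ}

/-- `C¹` test functions compactly supported in `Ω`. -/
def IsTestOn (Ω : Set (Euc N)) (φ : Euc N → ℝ) : Prop :=
  ContDiff ℝ 1 φ ∧ HasCompactSupport φ ∧ tsupport φ ⊆ Ω

/-- `i`-th partial derivative. -/
def pd (φ : Euc N → ℝ) (i : Fin N) (x : Euc N) : ℝ :=
  fderiv ℝ φ x (EuclideanSpace.single i 1)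

/-- `Ω` has Lipschitz boundary: near each boundary point, `Ω` coincides with the open
subgraph of a Lipschitz function in suitable orthonormal coordinates. -/
def HasLipschitzBoundary (Ω : Set (Euc N)) : Prop :=
  ∀ x ∈ frontier Ω, ∃ v : Euc N, ‖v‖ = 1 ∧
    ∃ (K : ℝ≥0) (g : (Submodule.span ℝ {v})ᗮ → ℝ), LipschitzWith K g ∧
      ∃ r : ℝ, 0 < r ∧ ∀ y ∈ Metric.ball x r,
        (y ∈ Ω ↔ (inner ℝ y v : ℝ) < g (Submodule.orthogonalProjectionOnto (Submodule.span ℝ {v})ᗮ y))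

/-- Polar representation of the distributional gradient: `Du = σ·ν` on `Ω`, where
`ν = |Du|` is a positive measure and `σ` a `ν`-a.e. unit vector field. -/
structure IsGradMeas (Ω : Set (Euc N)) (u : Euc N → ℝ) (σ : Euc N → Euc N)
    (ν : Measure (Euc N)) : Prop where
  unit : ∀ᵐ x ∂ν, ‖σ x‖ = 1
  outside : ν Ωᶜ = 0
  ibp : ∀ φ : Euc N → ℝ, IsTestOn Ω φ → ∀ i : Fin N,
    ∫ x in Ω, u x * pd φ i x = - ∫ x, φ x * σ x i ∂ν

/-- A measure is finite on compact subsets of `Ω` (local finiteness in `Ω`). -/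
def FiniteOnCompactsIn (Ω : Set (Euc N)) (ν : Measure (Euc N)) : Prop :=
  ∀ K : Set (Euc N), IsCompact K → K ⊆ Ω → ν K < ⊤

/-- The precise representative: limit of ball averages. -/
def pRep (u : Euc N → ℝ) (x : Euc N) : ℝ :=
  limUnder (nhdsWithin (0:ℝ) (Ioi 0)) (fun r => ⨍ y in Metric.ball x r, u y)

/-- `u` has an approximate limit at `x` (in the ball-average sense). -/
def ApproxCont (u : Euc N → ℝ) (x : Euc N) : Prop :=
  ∃ a : ℝ, Tendsto (fun r => ⨍ y in Metric.ball x r, |u y - a|)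
    (nhdsWithin (0:ℝ) (Ioi 0)) (𝓝 0)

/-- The jump part of `Du = σ ν` vanishes: `|Du|` does not charge the set of approximate
discontinuity points of `u`. -/
def NoJump (u : Euc N → ℝ) (ν : Measure (Euc N)) : Prop :=
  ν {x | ¬ ApproxCont u x} = 0

/-- The best constant in the Sobolev inequality
`‖v‖_{L^{N/(N-1)}} ≤ S₁ ‖∇v‖_{L¹}` on `W^{1,1}_0`. -/
def sobS1 (N : ℕ) : ℝ :=
  sInf {C : ℝ | 0 ≤ C ∧ ∀ φ : Euc N → ℝ, ContDiff ℝ 1 φ → HasCompactSupport φ →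
    (∫ x, |φ x| ^ ((N : ℝ) / ((N : ℝ) - 1))) ^ (((N : ℝ) - 1) / (N : ℝ)) ≤
      C * ∫ x, ‖gradient φ x‖}

/-- The `L^N(Ω)` norm. -/
def lNnorm (N : ℕ) (Ω : Set (Euc N)) (f : Euc N → ℝ) : ℝ :=
  (∫ x in Ω, |f x| ^ (N : ℝ)) ^ ((N : ℝ)⁻¹)

/-- Assumption (g1): `g : [0,∞) → (0,∞]` continuous, finite outside the origin, with
`g(s) ≤ c₁ s^{-θ}` for `0 < s ≤ s₁`. -/
structure G1 (g : ℝ → ℝ≥0∞) (c₁ θ s₁ : ℝ) : Prop where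
  cont : ContinuousOn g (Ici 0)
  pos : ∀ s ∈ Ici (0:ℝ), 0 < g s
  finite : ∀ s : ℝ, 0 < s → g s ≠ ⊤
  c1pos : 0 < c₁
  s1pos : 0 < s₁
  bound : ∀ s : ℝ, 0 < s → s ≤ s₁ → g s ≤ ENNReal.ofReal (c₁ / s ^ θ)

/-- Assumption (h1): `h : [0,∞) → [0,∞]` continuous, finite outside the origin, with
`h(s) ≤ c₂ s^{-γ}` for `0 < s ≤ s₂`, and `h(s) → h∞ < ∞` as `s → ∞`. -/
structure H1 (h : ℝ → ℝ≥0∞) (c₂ γ s₂ : ℝ) (hinf : ℝ≥0∞) : Prop where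
  cont : ContinuousOn h (Ici 0)
  finite : ∀ s : ℝ, 0 < s → h s ≠ ⊤
  c2pos : 0 < c₂
  s2pos : 0 < s₂
  bound : ∀ s : ℝ, 0 < s → s ≤ s₂ → h s ≤ ENNReal.ofReal (c₂ / s ^ γ)
  lim : Tendsto h atTop (𝓝 hinf)
  fin : hinf ≠ ⊤

/-- `tu` is the boundary trace of `u` on `∂Ω` (in the sense of averages from inside). -/
def IsBdryTrace (Ω : Set (Euc N)) (u tu : Euc N → ℝ) : Prop :=
  ∀ᵐ x ∂((μH[(N:ℝ) - 1]).restrict (frontier Ω)),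
    Tendsto (fun r => ⨍ y in Metric.ball x r ∩ Ω, |u y - tu x|)
      (nhdsWithin (0:ℝ) (Ioi 0)) (𝓝 0)


/-- `(u, gu) ∈ W^{1,p}_0(Ω)`: `u` extended by zero outside `Ω`, with weak gradient
`gu`, both in `L^p(ℝ^N)` (characterization of the zero trace on a Lipschitz domain). -/
structure MemW1p0 (Ω : Set (Euc N)) (p : ℝ) (u : Euc N → ℝ) (gu : Euc N → Euc N) :
    Prop where
  zero : ∀ x ∉ Ω, u x = 0
  gzero : ∀ x ∉ Ω, gu x = 0
  memu : MemLp u (ENNReal.ofReal p) volume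
  memgu : MemLp gu (ENNReal.ofReal p) volume
  ibp : ∀ φ : Euc N → ℝ, ContDiff ℝ 1 φ → HasCompactSupport φ → ∀ i : Fin N,
    ∫ x, u x * pd φ i x = - ∫ x, φ x * gu x i


section AuxNonexist

variable {N : ℕ}

private lemma coord_abs_le_norm (y : Euc N) (i : Fin N) : |y i| ≤ ‖y‖ := by
  have h1 : (inner ℝ y (EuclideanSpace.single i (1:ℝ)) : ℝ) = y i := by
    rw [EuclideanSpace.inner_single_right]; simp
  calc |y i| = |(inner ℝ y (EuclideanSpace.single i (1:ℝ)) : ℝ)| := by rw [h1]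
    _ ≤ ‖y‖ * ‖EuclideanSpace.single i (1:ℝ)‖ := abs_real_inner_le_norm _ _
    _ = ‖y‖ := by simp [EuclideanSpace.norm_single]

private lemma pd_continuous {f : Euc N → ℝ} (hf : ContDiff ℝ 1 f) (i : Fin N) :
    Continuous (pd f i) :=
  (ContinuousLinearMap.apply ℝ ℝ (EuclideanSpace.single i (1:ℝ))).continuous.comp
    (hf.continuous_fderiv one_ne_zero)

private lemma pd_hcs {f : Euc N → ℝ} (hf : HasCompactSupport f) (i : Fin N) :
    HasCompactSupport (pd f i) :=
  HasCompactSupport.fderiv_apply (𝕜 := ℝ) hf (EuclideanSpace.single i (1:ℝ))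

private lemma pd_zero_of_nmem {f : Euc N → ℝ} {x : Euc N} (hx : x ∉ tsupport f) (i : Fin N) :
    pd f i x = 0 := by
  have h : fderiv ℝ f x = 0 := by
    by_contra h
    exact hx (support_fderiv_subset (𝕜 := ℝ) (Function.mem_support.2 h))
  simp [pd, h]

private lemma ibp_smooth {f g : Euc N → ℝ} (hf : ContDiff ℝ 1 f)
    (hfs : HasCompactSupport f) (hg : ContDiff ℝ 1 g) (hgs : HasCompactSupport g) (i : Fin N) :
    ∫ x, f x * pd g i x = - ∫ x, g x * pd f i x := by
  have h1 : Integrable (fun x => pd f i x * g x) volume :=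
    ((pd_continuous hf i).mul hg.continuous).integrable_of_hasCompactSupport
      ((pd_hcs hfs i).mul_right)
  have h2 : Integrable (fun x => f x * pd g i x) volume :=
    (hf.continuous.mul (pd_continuous hg i)).integrable_of_hasCompactSupport hfs.mul_right
  have h3 : Integrable (fun x => f x * g x) volume :=
    (hf.continuous.mul hg.continuous).integrable_of_hasCompactSupport hfs.mul_right
  have h := integral_mul_fderiv_eq_neg_fderiv_mul_of_integrable
    (v := EuclideanSpace.single i (1:ℝ)) h1 h2 h3 (fun x _ => hf.differentiable one_ne_zero x)
    (fun x _ => hg.differentiable one_ne_zero x)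
  rw [show (fun x => g x * pd f i x) = (fun x => pd f i x * g x) from
    funext fun x => mul_comm _ _]
  exact h

private lemma integrable_bdd_mul_pd {u : Euc N → ℝ} (hu : AEStronglyMeasurable u volume)
    {M : ℝ} (hM0 : 0 ≤ M) (hM : ∀ᵐ x, |u x| ≤ M) {ψ : Euc N → ℝ} (hψ : ContDiff ℝ 1 ψ)
    (hψs : HasCompactSupport ψ) (i : Fin N) :
    Integrable (fun x => u x * pd ψ i x) volume := by
  obtain ⟨C, hC⟩ := (pd_continuous hψ i).bounded_above_of_compact_support (pd_hcs hψs i)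
  have hC0 : 0 ≤ C := (norm_nonneg _).trans (hC 0)
  have hg : Integrable ((tsupport ψ).indicator (fun _ => M * C)) volume :=
    (integrableOn_const (hψs : IsCompact (tsupport ψ)).measure_lt_top.ne).integrable_indicator
      (isClosed_tsupport ψ).measurableSet
  refine hg.mono' (hu.mul (pd_continuous hψ i).aestronglyMeasurable) ?_
  filter_upwards [hM] with x hx
  by_cases hxt : x ∈ tsupport ψ
  · rw [Set.indicator_of_mem hxt]
    calc ‖u x * pd ψ i x‖ = |u x| * ‖pd ψ i x‖ := by
          rw [norm_mul, Real.norm_eq_abs]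
      _ ≤ M * C := mul_le_mul hx (hC x) (norm_nonneg _) hM0
  · rw [Set.indicator_of_notMem hxt, pd_zero_of_nmem hxt i]
    simp

private lemma integrable_mul_coord {gu : Euc N → Euc N} {p : ℝ} (hp : 1 ≤ p)
    (hgu : MemLp gu (ENNReal.ofReal p) volume) {ψ : Euc N → ℝ} (hψc : Continuous ψ)
    (hψs : HasCompactSupport ψ) (i : Fin N) :
    Integrable (fun x => ψ x * gu x i) volume := by
  obtain ⟨C, hC⟩ := hψc.bounded_above_of_compact_support hψs
  have hC0 : 0 ≤ C := (norm_nonneg _).trans (hC 0)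
  haveI : IsFiniteMeasure (volume.restrict (tsupport ψ)) :=
    ⟨by rw [Measure.restrict_apply_univ]
        exact (hψs : IsCompact (tsupport ψ)).measure_lt_top⟩
  have hgu1 : Integrable gu (volume.restrict (tsupport ψ)) :=
    (hgu.restrict _).integrable (by simpa using ENNReal.one_le_ofReal.2 hp)
  have hg : Integrable ((tsupport ψ).indicator (fun x => C * ‖gu x‖)) volume :=
    IntegrableOn.integrable_indicator (s := tsupport ψ) (hgu1.norm.const_mul C)
      (isClosed_tsupport ψ).measurableSet
  have hcoord : AEStronglyMeasurable (fun x => gu x i) volume :=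
    (EuclideanSpace.proj i : Euc N →L[ℝ] ℝ).continuous.comp_aestronglyMeasurable
      hgu.aestronglyMeasurable
  refine hg.mono' (hψc.aestronglyMeasurable.mul hcoord) ?_
  refine Filter.Eventually.of_forall fun x => ?_
  by_cases hxt : x ∈ tsupport ψ
  · rw [Set.indicator_of_mem hxt]
    calc ‖ψ x * gu x i‖ = ‖ψ x‖ * |gu x i| := by
          rw [norm_mul, Real.norm_eq_abs, Real.norm_eq_abs]
      _ ≤ C * ‖gu x‖ := mul_le_mul (hC x) (coord_abs_le_norm _ _) (abs_nonneg _) hC0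
  · rw [Set.indicator_of_notMem hxt, image_eq_zero_of_notMem_tsupport hxt]
    simp

end AuxNonexist

/-- Section 7.1, `p > 1`. For `λ ≥ 1` and `γ ≥ 0` there is no
(nonnegative, a.e. positive) weak solution `u ∈ W^{1,p}_0(Ω) ∩ L^∞(Ω)` with
`u^{-γ} ∈ L¹_loc(Ω)` of `-Δ_p u = λ|∇u|^p/u + u^{-γ}` in `Ω`, `u = 0` on `∂Ω`,
tested with all `φ ∈ W^{1,p}_0(Ω) ∩ L^∞(Ω)`. -/
theorem nonexistence_p_laplacian (N : ℕ) (hN : 1 ≤ N) (Ω : Set (Euc N))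
    (hΩo : IsOpen Ω) (hΩne : Ω.Nonempty) (hΩb : Bornology.IsBounded Ω)
    (hΩl : HasLipschitzBoundary Ω)
    (p lam γ : ℝ) (hp : 1 < p) (hlam : 1 ≤ lam) (hγ : 0 ≤ γ) :
    ¬ ∃ (u : Euc N → ℝ) (gu : Euc N → Euc N),
        MemW1p0 Ω p u gu ∧
        (∃ M : ℝ, ∀ᵐ x ∂(volume : Measure (Euc N)), |u x| ≤ M) ∧
        (∀ᵐ x ∂(volume.restrict Ω), 0 < u x) ∧
        (∀ K : Set (Euc N), IsCompact K → K ⊆ Ω →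
          IntegrableOn (fun x => (u x) ^ (-γ)) K) ∧
        IntegrableOn (fun x => ‖gu x‖ ^ p / u x) Ω ∧
        (∀ (φ : Euc N → ℝ) (gφ : Euc N → Euc N), MemW1p0 Ω p φ gφ →
          (∃ M : ℝ, ∀ᵐ x ∂(volume : Measure (Euc N)), |φ x| ≤ M) →
          ∫ x in Ω, ‖gu x‖ ^ (p - 2) * (inner ℝ (gu x) (gφ x) : ℝ) =
            lam * (∫ x in Ω, (‖gu x‖ ^ p / u x) * φ x) +
              ∫ x in Ω, φ x * (u x) ^ (-γ)) := by
  rintro ⟨u, gu, hW, ⟨M, hM⟩, hpos, hloc, hint, heq⟩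
  have hΩm : MeasurableSet Ω := hΩo.measurableSet
  haveI : IsFiniteMeasure (volume.restrict Ω) :=
    ⟨by rw [Measure.restrict_apply_univ]; exact hΩb.measure_lt_top⟩
  have hΩpos : 0 < volume Ω := hΩo.measure_pos volume hΩne
  set M' : ℝ := max M 0 with hM'def
  have hM' : ∀ᵐ x : Euc N, |u x| ≤ M' := hM.mono fun x hx => hx.trans (le_max_left _ _)
  have hM'0 : 0 ≤ M' := le_max_right _ _
  have hp0 : (0:ℝ) < p := by linarith
  -- pointwise key identity
  have hkey : ∀ a : Euc N, ‖a‖ ^ (p-2) * (inner ℝ a a : ℝ) = ‖a‖ ^ p := by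
    intro a
    rcases eq_or_ne a 0 with rfl | ha
    · simp [Real.zero_rpow hp0.ne']
    · have hn : 0 < ‖a‖ := norm_pos_iff.2 ha
      rw [real_inner_self_eq_norm_mul_norm,
        show ‖a‖ * ‖a‖ = ‖a‖ ^ ((2:ℕ):ℝ) by rw [Real.rpow_natCast]; ring,
        ← Real.rpow_add hn]
      norm_num
  have hgu_m : AEStronglyMeasurable gu (volume.restrict Ω) :=
    hW.memgu.aestronglyMeasurable.restrict
  have hup_m : AEStronglyMeasurable (fun x => ‖gu x‖ ^ p) (volume.restrict Ω) :=
    (Real.continuous_rpow_const hp0.le).comp_aestronglyMeasurable hgu_m.norm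
  -- ‖gu‖^p is integrable on Ω
  have hI1 : Integrable (fun x => ‖gu x‖ ^ p) (volume.restrict Ω) := by
    refine (hint.const_mul M').mono' hup_m ?_
    filter_upwards [ae_restrict_of_ae hM', hpos] with x h1 h2
    have hqnn : 0 ≤ ‖gu x‖ ^ p / u x :=
      div_nonneg (Real.rpow_nonneg (norm_nonneg _) _) h2.le
    rw [Real.norm_eq_abs, abs_of_nonneg (Real.rpow_nonneg (norm_nonneg _) _)]
    calc ‖gu x‖ ^ p = ‖gu x‖ ^ p / u x * u x := (div_mul_cancel₀ _ h2.ne').symm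
      _ ≤ ‖gu x‖ ^ p / u x * M' :=
          mul_le_mul_of_nonneg_left ((le_abs_self _).trans h1) hqnn
      _ = M' * (‖gu x‖ ^ p / u x) := mul_comm _ _
  have hMu : ∫ x in Ω, (‖gu x‖ ^ p / u x) * u x = ∫ x in Ω, ‖gu x‖ ^ p :=
    integral_congr_ae (hpos.mono fun x hx => div_mul_cancel₀ _ hx.ne')
  have hLu : ∫ x in Ω, ‖gu x‖ ^ (p-2) * (inner ℝ (gu x) (gu x) : ℝ) = ∫ x in Ω, ‖gu x‖ ^ p :=
    integral_congr_ae (Filter.Eventually.of_forall fun x => hkey (gu x))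
  have E1 := heq u gu hW ⟨M, hM⟩
  rw [hLu, hMu] at E1
  have hInn : 0 ≤ ∫ x in Ω, ‖gu x‖ ^ p :=
    integral_nonneg fun x => Real.rpow_nonneg (norm_nonneg _) _
  have hBu_le : (∫ x in Ω, u x * u x ^ (-γ)) ≤ 0 := by
    nlinarith [mul_nonneg (sub_nonneg.mpr hlam) hInn]
  by_cases hBint : Integrable (fun x => u x * u x ^ (-γ)) (volume.restrict Ω)
  · -- integrable case: the integral is positive, contradiction
    have hnn : 0 ≤ᵐ[volume.restrict Ω] fun x => u x * u x ^ (-γ) :=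
      hpos.mono fun x hx => mul_nonneg hx.le (Real.rpow_nonneg hx.le _)
    have hBnn : 0 ≤ ∫ x in Ω, u x * u x ^ (-γ) := integral_nonneg_of_ae hnn
    have hB0 : ∫ x in Ω, u x * u x ^ (-γ) = 0 := le_antisymm hBu_le hBnn
    have hz := (integral_eq_zero_iff_of_nonneg_ae hnn hBint).mp hB0
    have hFalse : ∀ᵐ x ∂volume.restrict Ω, False := by
      filter_upwards [hz, hpos] with x h1 h2
      simp only [Pi.zero_apply] at h1
      exact absurd h1 (mul_pos h2 (Real.rpow_pos_of_pos h2 (-γ))).ne'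
    have hne : volume.restrict Ω ≠ 0 := by
      rw [Ne, Measure.restrict_eq_zero]
      exact hΩpos.ne'
    haveI := ae_neBot.2 hne
    obtain ⟨x, hx⟩ := hFalse.exists
    exact hx
  · -- non-integrable case: use a bump function
    have hBu0 : ∫ x in Ω, u x * u x ^ (-γ) = 0 := integral_undef hBint
    rw [hBu0, add_zero] at E1
    obtain ⟨x₀, hx₀⟩ := hΩne
    obtain ⟨r, hr, hball⟩ := Metric.isOpen_iff.mp hΩo x₀ hx₀
    have hb1 : (0:ℝ) < r/4 := by linarith
    have hb2 : r/4 < r/2 := by linarith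
    let b : ContDiffBump x₀ := ⟨r/4, r/2, hb1, hb2⟩
    have hts : tsupport (⇑b) = Metric.closedBall x₀ (r/2) := b.tsupport_eq
    have htsΩ : tsupport (⇑b) ⊆ Ω := by
      rw [hts]; exact (Metric.closedBall_subset_ball (by linarith)).trans hball
    have hχc : ContDiff ℝ 1 (⇑b) := b.contDiff
    have hχs : HasCompactSupport (⇑b) := b.hasCompactSupport
    set gχ : Euc N → Euc N :=
      fun x => (EuclideanSpace.equiv (Fin N) ℝ).symm (fun i => pd (⇑b) i x) with hgχdef
    have hgχ_coord : ∀ (x : Euc N) (i : Fin N), gχ x i = pd (⇑b) i x := fun x i => rfl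
    have hgχc : Continuous gχ :=
      (EuclideanSpace.equiv (Fin N) ℝ).symm.continuous.comp
        (continuous_pi fun i => pd_continuous hχc i)
    have hgχ_supp : Function.support gχ ⊆ tsupport (⇑b) := by
      intro x hx
      by_contra hxt
      apply hx
      have h0 : (fun i => pd (⇑b) i x) = (0 : Fin N → ℝ) :=
        funext fun i => pd_zero_of_nmem hxt i
      show (EuclideanSpace.equiv (Fin N) ℝ).symm (fun i => pd (⇑b) i x) = 0
      rw [h0, map_zero]
    have hgχs : HasCompactSupport gχ := hχs.mono' hgχ_supp
    obtain ⟨Cg, hCg⟩ := hgχc.bounded_above_of_compact_support hgχs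
    have hCg0 : 0 ≤ Cg := (norm_nonneg _).trans (hCg 0)
    have hgz : ∀ x ∉ Ω, gχ x = 0 := by
      intro x hx
      by_contra h
      exact hx (htsΩ (hgχ_supp (Function.mem_support.2 h)))
    have hbdd1 : ∀ x : Euc N, |b x| ≤ 1 := fun x => by
      rw [abs_of_nonneg b.nonneg]; exact b.le_one
    -- χ is in W^{1,p}_0
    have hmemχ : MemW1p0 Ω p (⇑b) gχ := by
      refine ⟨?_, hgz, ?_, ?_, ?_⟩
      · intro x hx
        exact image_eq_zero_of_notMem_tsupport fun h => hx (htsΩ h)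
      · exact b.continuous.memLp_of_hasCompactSupport hχs
      · exact hgχc.memLp_of_hasCompactSupport hgχs
      · intro φ hφ hφs i
        exact ibp_smooth hχc hχs hφ hφs i
    -- u + χ is in W^{1,p}_0
    have hmem3 : MemW1p0 Ω p (fun x => u x + b x) (fun x => gu x + gχ x) := by
      refine ⟨?_, ?_, ?_, ?_, ?_⟩
      · intro x hx
        rw [hW.zero x hx, image_eq_zero_of_notMem_tsupport fun h => hx (htsΩ h), add_zero]
      · intro x hx
        rw [hW.gzero x hx, hgz x hx, add_zero]
      · exact hW.memu.add (b.continuous.memLp_of_hasCompactSupport hχs)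
      · exact hW.memgu.add (hgχc.memLp_of_hasCompactSupport hgχs)
      · intro φ hφ hφs i
        have h1 := hW.ibp φ hφ hφs i
        have h2 : ∫ x, b x * pd φ i x = - ∫ x, φ x * gχ x i :=
          ibp_smooth hχc hχs hφ hφs i
        have Iu := integrable_bdd_mul_pd hW.memu.aestronglyMeasurable hM'0 hM' hφ hφs i
        have Iχ : Integrable (fun x => b x * pd φ i x) volume :=
          (b.continuous.mul (pd_continuous hφ i)).integrable_of_hasCompactSupport
            hχs.mul_right
        have Ju := integrable_mul_coord hp.le hW.memgu hφ.continuous hφs i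
        have Jχ : Integrable (fun x => φ x * gχ x i) volume :=
          (hφ.continuous.mul (pd_continuous hχc i)).integrable_of_hasCompactSupport
            hφs.mul_right
        calc ∫ x, (u x + b x) * pd φ i x
            = ∫ x, (u x * pd φ i x + b x * pd φ i x) := by
              apply integral_congr_ae
              exact Filter.Eventually.of_forall fun x => by ring
          _ = (∫ x, u x * pd φ i x) + ∫ x, b x * pd φ i x := integral_add Iu Iχ
          _ = -(∫ x, φ x * gu x i) + -(∫ x, φ x * gχ x i) := by rw [h1, h2]
          _ = -((∫ x, φ x * gu x i) + ∫ x, φ x * gχ x i) := by ring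
          _ = -∫ x, (φ x * gu x i + φ x * gχ x i) := by rw [integral_add Ju Jχ]
          _ = -∫ x, φ x * (gu x + gχ x) i := by
              congr 1
              apply integral_congr_ae
              refine Filter.Eventually.of_forall fun x => ?_
              show φ x * gu x i + φ x * gχ x i = φ x * (gu x i + gχ x i)
              ring
    have hbd3 : ∃ M0 : ℝ, ∀ᵐ x : Euc N, |u x + b x| ≤ M0 := by
      refine ⟨M' + 1, ?_⟩
      filter_upwards [hM'] with x hx
      calc |u x + b x| ≤ |u x| + |b x| := abs_add_le _ _
        _ ≤ M' + 1 := add_le_add hx (hbdd1 x)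
    have E2 := heq (⇑b) gχ hmemχ ⟨1, Filter.Eventually.of_forall hbdd1⟩
    have E3 := heq (fun x => u x + b x) (fun x => gu x + gχ x) hmem3 hbd3
    beta_reduce at E3
    -- integrability facts for splitting
    have hIL1 : Integrable (fun x => ‖gu x‖ ^ (p-2) * (inner ℝ (gu x) (gu x) : ℝ))
        (volume.restrict Ω) :=
      hI1.congr (Filter.Eventually.of_forall fun x => (hkey (gu x)).symm)
    have hIL2 : Integrable (fun x => ‖gu x‖ ^ (p-2) * (inner ℝ (gu x) (gχ x) : ℝ))
        (volume.restrict Ω) := by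
      have hbnd : ∀ x, ‖‖gu x‖ ^ (p-2) * (inner ℝ (gu x) (gχ x) : ℝ)‖
          ≤ Cg * (1 + ‖gu x‖ ^ p) := by
        intro x
        rcases eq_or_ne (gu x) 0 with h0 | h0
        · rw [h0]
          simp only [inner_zero_left, mul_zero, norm_zero]
          apply mul_nonneg hCg0
          positivity
        · have ht : 0 < ‖gu x‖ := norm_pos_iff.2 h0
          have h1 : |(inner ℝ (gu x) (gχ x) : ℝ)| ≤ ‖gu x‖ * Cg :=
            (abs_real_inner_le_norm _ _).trans
              (mul_le_mul_of_nonneg_left (hCg x) (norm_nonneg _))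
          calc ‖‖gu x‖ ^ (p-2) * (inner ℝ (gu x) (gχ x) : ℝ)‖
              = ‖gu x‖ ^ (p-2) * |(inner ℝ (gu x) (gχ x) : ℝ)| := by
                rw [Real.norm_eq_abs, abs_mul,
                  abs_of_nonneg (Real.rpow_nonneg (norm_nonneg _) _)]
            _ ≤ ‖gu x‖ ^ (p-2) * (‖gu x‖ * Cg) :=
                mul_le_mul_of_nonneg_left h1 (Real.rpow_nonneg (norm_nonneg _) _)
            _ = (‖gu x‖ ^ (p-2) * ‖gu x‖ ^ (1:ℝ)) * Cg := by rw [Real.rpow_one]; ring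
            _ = ‖gu x‖ ^ (p-1) * Cg := by
                rw [← Real.rpow_add ht, show p - 2 + 1 = p - 1 by ring]
            _ ≤ (1 + ‖gu x‖ ^ p) * Cg := by
                apply mul_le_mul_of_nonneg_right _ hCg0
                rcases le_total ‖gu x‖ 1 with h | h
                · have h2 := Real.rpow_le_one (norm_nonneg (gu x)) h
                    (by linarith : (0:ℝ) ≤ p - 1)
                  have h3 := Real.rpow_nonneg (norm_nonneg (gu x)) p
                  linarith
                · have h2 := Real.rpow_le_rpow_of_exponent_le h
                    (by linarith : p - 1 ≤ p)
                  linarith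
            _ = Cg * (1 + ‖gu x‖ ^ p) := mul_comm _ _
      have hm1 : Measurable fun t : ℝ => t ^ (p-2) := by fun_prop
      refine (((integrable_const (1:ℝ)).add hI1).const_mul Cg).mono' ?_
        (Filter.Eventually.of_forall hbnd)
      exact ((hm1.comp_aemeasurable hgu_m.norm.aemeasurable).aestronglyMeasurable).mul
        (hgu_m.inner hgχc.aestronglyMeasurable.restrict)
    have hIM1 : Integrable (fun x => (‖gu x‖ ^ p / u x) * u x) (volume.restrict Ω) :=
      hI1.congr (hpos.mono fun x hx => (div_mul_cancel₀ _ hx.ne').symm)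
    have hIM2 : Integrable (fun x => (‖gu x‖ ^ p / u x) * b x) (volume.restrict Ω) := by
      have h := hint.bdd_mul (b.continuous.aestronglyMeasurable.restrict)
        (Filter.Eventually.of_forall fun x => (by rw [Real.norm_eq_abs]; exact hbdd1 x : ‖b x‖ ≤ 1))
      exact h.congr (Filter.Eventually.of_forall fun x => mul_comm _ _)
    have hIB2 : Integrable (fun x => b x * u x ^ (-γ)) (volume.restrict Ω) := by
      have h1 : IntegrableOn (fun x => u x ^ (-γ)) (tsupport ⇑b) volume :=
        hloc _ (hχs : IsCompact (tsupport ⇑b)) htsΩ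
      have h2 : Integrable (fun x => b x * u x ^ (-γ))
          (volume.restrict (tsupport ⇑b)) :=
        h1.bdd_mul (b.continuous.aestronglyMeasurable.restrict)
          (Filter.Eventually.of_forall fun x => (by rw [Real.norm_eq_abs]; exact hbdd1 x : ‖b x‖ ≤ 1))
      have hsupp : Function.support (fun x => b x * u x ^ (-γ)) ⊆ tsupport ⇑b := by
        intro x hx
        exact subset_closure (Function.mem_support.2 (left_ne_zero_of_mul hx))
      have h3 : Integrable (fun x => b x * u x ^ (-γ)) volume :=
        (integrableOn_iff_integrable_of_support_subset hsupp).mp h2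
      exact h3.restrict
    -- the sum term cannot be integrable
    have hBs0 : ∫ x in Ω, (u x + b x) * u x ^ (-γ) = 0 := by
      apply integral_undef
      intro hco
      apply hBint
      have h := hco.sub hIB2
      refine h.congr (Filter.Eventually.of_forall fun x => ?_)
      simp only [Pi.sub_apply]
      ring
    -- split E3
    have hLs : ∫ x in Ω, ‖gu x‖ ^ (p-2) * (inner ℝ (gu x) (gu x + gχ x) : ℝ)
        = (∫ x in Ω, ‖gu x‖ ^ (p-2) * (inner ℝ (gu x) (gu x) : ℝ))
          + ∫ x in Ω, ‖gu x‖ ^ (p-2) * (inner ℝ (gu x) (gχ x) : ℝ) := by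
      rw [← integral_add hIL1 hIL2]
      apply integral_congr_ae
      exact Filter.Eventually.of_forall fun x => by
        simp only [inner_add_right, mul_add]
    have hMs : ∫ x in Ω, (‖gu x‖ ^ p / u x) * (u x + b x)
        = (∫ x in Ω, (‖gu x‖ ^ p / u x) * u x)
          + ∫ x in Ω, (‖gu x‖ ^ p / u x) * b x := by
      rw [← integral_add hIM1 hIM2]
      apply integral_congr_ae
      exact Filter.Eventually.of_forall fun x => by ring
    rw [hLs, hMs, hBs0, hLu, hMu] at E3
    rw [hLu] at hLs
    -- conclude ∫ χ u^{-γ} = 0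
    have hBχ : ∫ x in Ω, b x * u x ^ (-γ) = 0 := by
      linear_combination E3 - E2 - E1
    -- but it must be positive
    have hBχnn : 0 ≤ᵐ[volume.restrict Ω] fun x => b x * u x ^ (-γ) :=
      hpos.mono fun x hx => mul_nonneg b.nonneg (Real.rpow_nonneg hx.le _)
    have hz := (integral_eq_zero_iff_of_nonneg_ae hBχnn hIB2).mp hBχ
    have hB'sub : Metric.ball x₀ (r/4) ⊆ Ω :=
      (Metric.ball_subset_ball (by linarith)).trans hball
    have hz' := ae_restrict_of_ae_restrict_of_subset hB'sub hz
    have hpos' := ae_restrict_of_ae_restrict_of_subset hB'sub hpos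
    have hFalse : ∀ᵐ x ∂volume.restrict (Metric.ball x₀ (r/4)), False := by
      filter_upwards [hz', hpos', ae_restrict_mem measurableSet_ball] with x h1 h2 h3
      simp only [Pi.zero_apply] at h1
      have hb1x : b x = 1 := b.one_of_mem_closedBall (Metric.ball_subset_closedBall h3)
      rw [hb1x, one_mul] at h1
      exact absurd h1 (Real.rpow_pos_of_pos h2 _).ne'
    have hne : volume.restrict (Metric.ball x₀ (r/4)) ≠ 0 := by
      rw [Ne, Measure.restrict_eq_zero]
      exact (measure_ball_pos volume x₀ hb1).ne'
    haveI := ae_neBot.2 hne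
    obtain ⟨x, hx⟩ := hFalse.exists
    exact hx


end
end

section
/- Let Ω ⊂ ℝ^N be a bounded convex calibrable set of class C^{1,1}, and let λ, θ, γ > 0. Then the constant function u ≡ (|Ω|/Per(Ω))^{1/γ} is a solution of the Dirichlet problem −Δ₁u = λ|Du|/u^θ + u^{−γ} in Ω, u = 0 on ∂Ω, in the following sense: taking z := ξ|_Ω, the restriction to Ω of the calibrating vector field ξ, one has z ∈ DM^∞(Ω), ‖z‖_∞ ≤ 1, −div z = λ u^{−θ}|Du| + u^{−γ} as measures in Ω (both sides equaling the constant Per(Ω)/|Ω| times Lebesgue measure, since Du = 0), (z,Du) = |Du| as measures in Ω, and u(1+[z,ν]) = 0 H^{N−1}-a.e. on ∂Ω (since [ξ,ν^Ω] = −1). -/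
open MeasureTheory Filter Topology Set Metric
open scoped ENNReal NNReal Topology

noncomputable section

variable {N : ℕ}

/-- The nonnegative measure `g(u^*)|Du| + h(u)f 𝔏^N⌊Ω` appearing as `-div z`. -/
def rhsMeasure (Ω : Set (Euc N)) (g h : ℝ → ℝ≥0∞) (f u : Euc N → ℝ)
    (ν : Measure (Euc N)) : Measure (Euc N) :=
  ν.withDensity (fun y => g (pRep u y)) +
    (volume.restrict Ω).withDensity (fun y => h (u y) * ENNReal.ofReal (f y))

/-- Definition 3.1: a (distributional, Anzellotti-sense) solution to
`-Δ₁ u = g(u)|Du| + h(u) f` in `Ω`, `u = 0` on `∂Ω`. -/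
structure IsSol1Lap (Ω : Set (Euc N)) (g h : ℝ → ℝ≥0∞) (f u : Euc N → ℝ)
    (σ : Euc N → Euc N) (ν : Measure (Euc N)) (z : Euc N → Euc N)
    (zn tu : Euc N → ℝ) : Prop where
  /-- `u ≥ 0`. -/
  nonneg : ∀ᵐ x ∂(volume.restrict Ω), 0 ≤ u x
  /-- `u ∈ L¹(Ω)`. -/
  uint : IntegrableOn u Ω
  /-- `u ∈ BV(Ω)` with `Du = σ ν`, `ν = |Du|`. -/
  grad : IsGradMeas Ω u σ ν
  /-- `|Du|` has finite total variation. -/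
  varfin : ν Set.univ < ⊤
  /-- `g(u^*) ∈ L¹_loc(Ω, |Du|)`. -/
  gL1loc : ∀ K : Set (Euc N), IsCompact K → K ⊆ Ω → ∫⁻ x in K, g (pRep u x) ∂ν < ⊤
  /-- `h(u) f ∈ L¹_loc(Ω)`. -/
  hfL1loc : ∀ K : Set (Euc N), IsCompact K → K ⊆ Ω →
    IntegrableOn (fun x => (h (u x)).toReal * f x) K
  /-- `‖z‖_{L^∞(Ω)^N} ≤ 1`. -/
  zbd : ∀ᵐ x ∂(volume.restrict Ω), ‖z x‖ ≤ 1
  /-- `-div z = g(u^*)|Du| + h(u) f` as measures in `Ω`. -/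
  diveq : ∀ φ : Euc N → ℝ, IsTestOn Ω φ →
    ∫ x in Ω, (inner ℝ (z x) (gradient φ x) : ℝ) = ∫ x, φ x ∂(rhsMeasure Ω g h f u ν)
  /-- `(z, Du) = |Du|` as measures in `Ω` (Anzellotti pairing, written out using
  `-div z = rhsMeasure`). -/
  pairing : ∀ φ : Euc N → ℝ, IsTestOn Ω φ →
    (∫ x, pRep u x * φ x ∂(rhsMeasure Ω g h f u ν)) -
      ∫ x in Ω, u x * (inner ℝ (z x) (gradient φ x) : ℝ) = ∫ x, φ x ∂ν
  /-- `zn = [z,ν]` is the weak normal trace of `z` on `∂Ω` (Green formula). -/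
  greenTrace : ∀ φ : Euc N → ℝ, ContDiff ℝ 1 φ →
    (- ∫ x, φ x ∂(rhsMeasure Ω g h f u ν)) +
        ∫ x in Ω, (inner ℝ (z x) (gradient φ x) : ℝ) =
      ∫ x in frontier Ω, φ x * zn x ∂(μH[(N:ℝ) - 1])
  /-- `‖[z,ν]‖_{L^∞(∂Ω)} ≤ 1`. -/
  znbd : ∀ᵐ x ∂((μH[(N:ℝ) - 1]).restrict (frontier Ω)), |zn x| ≤ 1
  /-- `tu` is the boundary trace of `u`. -/
  traceu : IsBdryTrace Ω u tu
  /-- the weak boundary condition `u (1 + [z,ν]) = 0` `H^{N-1}`-a.e. on `∂Ω`. -/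
  bdry : ∀ᵐ x ∂((μH[(N:ℝ) - 1]).restrict (frontier Ω)), tu x * (1 + zn x) = 0


/-- `Ω` has boundary of class `C^{1,1}`: near each boundary point, `Ω` coincides with
the open subgraph of a `C¹` function with Lipschitz derivative, in suitable
orthonormal coordinates. -/
def HasC11Boundary (Ω : Set (Euc N)) : Prop :=
  ∀ x ∈ frontier Ω, ∃ v : Euc N, ‖v‖ = 1 ∧
    ∃ gph : (Submodule.span ℝ {v})ᗮ → ℝ, ContDiff ℝ 1 gph ∧
      (∃ K : ℝ≥0, LipschitzWith K (fderiv ℝ gph)) ∧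
      ∃ r : ℝ, 0 < r ∧ ∀ y ∈ Metric.ball x r,
        (y ∈ Ω ↔ (inner ℝ y v : ℝ) < gph (Submodule.orthogonalProjectionOnto (Submodule.span ℝ {v})ᗮ y))


lemma pRep_const {N : ℕ} (c : ℝ) (x : Euc N) : pRep (fun _ => c) x = c := by
  have h : Tendsto (fun r : ℝ => ⨍ y in Metric.ball x r, (fun _ : Euc N => c) y)
      (nhdsWithin (0:ℝ) (Ioi 0)) (𝓝 c) := by
    refine Filter.Tendsto.congr' ?_ tendsto_const_nhds
    filter_upwards [self_mem_nhdsWithin] with r hr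
    exact (setAverage_const (measure_ball_pos volume x hr).ne' measure_ball_lt_top.ne c).symm
  exact h.limUnder_eq

lemma integral_fderiv_apply_eq_zero {N : ℕ} {φ : Euc N → ℝ} (hφ : ContDiff ℝ 1 φ)
    (hcs : HasCompactSupport φ) (v : Euc N) :
    ∫ x, fderiv ℝ φ x v = 0 := by
  have hcont : Continuous fun x => fderiv ℝ φ x v :=
    (ContinuousLinearMap.apply ℝ ℝ v).continuous.comp (hφ.continuous_fderiv one_ne_zero)
  have hcsd : HasCompactSupport fun x => fderiv ℝ φ x v :=
    (hcs.fderiv ℝ).comp_left (g := fun L : Euc N →L[ℝ] ℝ => L v) (by simp)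
  have h := integral_mul_fderiv_eq_neg_fderiv_mul_of_integrable
    (f := fun _ : Euc N => (1:ℝ)) (g := φ) (v := v) (μ := volume)
    (by simp [fderiv_const]) (by simpa using hcont.integrable_of_hasCompactSupport hcsd)
    (by simpa using hφ.continuous.integrable_of_hasCompactSupport hcs)
    (fun x _ => differentiableAt_const (1:ℝ)) (fun x _ => hφ.differentiable one_ne_zero x)
  simpa [fderiv_const] using h

lemma fderiv_zero_outside {N : ℕ} {Ω : Set (Euc N)} {φ : Euc N → ℝ}
    (hsupp : tsupport φ ⊆ Ω) {x : Euc N} (hx : x ∉ Ω) : fderiv ℝ φ x = 0 :=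
  Function.notMem_support.mp fun h => hx (hsupp (support_fderiv_subset ℝ h))

/-- Example 7.2. Let `Ω` be a bounded convex calibrable set of class
`C^{1,1}` with calibration `ξ` (so `‖ξ‖_∞ ≤ 1`, `(ξ,Dχ_Ω) = |Dχ_Ω|`,
`-div ξ = λ_Ω χ_Ω` in `D'(ℝ^N)` with `λ_Ω = Per(Ω)/|Ω|` and `[ξ,ν^Ω] = -1`
`H^{N-1}`-a.e. on `∂Ω`). Then for all `λ, θ, γ > 0` the constant function
`u ≡ (|Ω|/Per(Ω))^{1/γ}` is a solution of
`-Δ₁ u = λ|Du|/u^θ + u^{-γ}` in `Ω`, `u = 0` on `∂Ω` (in the sense of Definition 3.1,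
with vector field `z := ξ|_Ω`, `Du = 0`, `[z,ν] = -1` and boundary trace `u`). -/
theorem calibrable_constant_solution (N : ℕ) (hN : 1 ≤ N) (Ω : Set (Euc N))
    (hΩo : IsOpen Ω) (hΩne : Ω.Nonempty) (hΩb : Bornology.IsBounded Ω)
    (hΩc : Convex ℝ Ω) (hΩreg : HasC11Boundary Ω)
    (lam θ γ : ℝ) (hlam : 0 < lam) (hθ : 0 < θ) (hγ : 0 < γ)
    -- perimeter structure: `χ_Ω ∈ BV(ℝ^N)` with `|Dχ_Ω| = νE`
    (σE : Euc N → Euc N) (νE : Measure (Euc N))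
    (hgradE : IsGradMeas Set.univ (Ω.indicator (fun _ => (1:ℝ))) σE νE)
    (hνEfin : νE Set.univ < ⊤) (hPer : 0 < (νE Set.univ).toReal)
    -- the calibration `ξ` and the constant `λ_Ω`
    (ξ : Euc N → Euc N) (hξbd : ∀ᵐ x ∂(volume : Measure (Euc N)), ‖ξ x‖ ≤ 1)
    (lamE : ℝ) (hlamE : lamE = (νE Set.univ).toReal / (volume Ω).toReal)
    (hdivξ : ∀ φ : Euc N → ℝ, IsTestOn Set.univ φ →
      ∫ x, (inner ℝ (ξ x) (gradient φ x) : ℝ) = lamE * ∫ x in Ω, φ x)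
    (hpairξ : ∀ φ : Euc N → ℝ, IsTestOn Set.univ φ →
      lamE * (∫ x in Ω, pRep (Ω.indicator (fun _ => (1:ℝ))) x * φ x) -
          (∫ x, Ω.indicator (fun _ => (1:ℝ)) x * (inner ℝ (ξ x) (gradient φ x) : ℝ)) =
        ∫ x, φ x ∂νE)
    -- `[ξ, ν^Ω] = -1` `H^{N-1}`-a.e. on `∂Ω` (Green formula on `Ω`)
    (hnt : ∀ φ : Euc N → ℝ, ContDiff ℝ 1 φ →
      (- (lamE * ∫ x in Ω, φ x)) + ∫ x in Ω, (inner ℝ (ξ x) (gradient φ x) : ℝ) =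
        ∫ x in frontier Ω, φ x * (-1 : ℝ) ∂(μH[(N:ℝ) - 1])) :
    -- conclusion: the constant `(|Ω|/Per(Ω))^{1/γ}` solves the singular problem, with
    -- `z = ξ|_Ω`, `|Du| = 0`, `[z,ν] = -1` and boundary trace equal to the constant
    IsSol1Lap Ω
      (fun s => if s ≤ 0 then ⊤ else ENNReal.ofReal (lam / s ^ θ))
      (fun s => if s ≤ 0 then ⊤ else ENNReal.ofReal (s ^ (-γ)))
      (fun _ => 1)
      (fun _ => ((volume Ω).toReal / (νE Set.univ).toReal) ^ γ⁻¹)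
      (fun _ => 0) (0 : Measure (Euc N)) ξ
      (fun _ => (-1 : ℝ))
      (fun _ => ((volume Ω).toReal / (νE Set.univ).toReal) ^ γ⁻¹) := by
  have hV : 0 < (volume Ω).toReal :=
    ENNReal.toReal_pos (hΩo.measure_pos volume hΩne).ne' hΩb.measure_lt_top.ne
  set c : ℝ := ((volume Ω).toReal / (νE Set.univ).toReal) ^ γ⁻¹ with hc_def
  have hVP : (0:ℝ) < (volume Ω).toReal / (νE Set.univ).toReal := div_pos hV hPer
  have hc : 0 < c := Real.rpow_pos_of_pos hVP _
  have hcnot : ¬ c ≤ 0 := not_le.2 hc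
  have hck : c ^ (-γ) = lamE := by
    rw [hc_def, ← Real.rpow_mul hVP.le]
    have hexp : γ⁻¹ * (-γ) = -1 := by field_simp
    rw [hexp, Real.rpow_neg_one, inv_div, hlamE]
  have hlamE0 : 0 ≤ lamE := by rw [hlamE]; positivity
  have hrhs : rhsMeasure Ω (fun s => if s ≤ 0 then ⊤ else ENNReal.ofReal (lam / s ^ θ))
      (fun s => if s ≤ 0 then ⊤ else ENNReal.ofReal (s ^ (-γ))) (fun _ => 1)
      (fun _ => c) (0 : Measure (Euc N)) =
      (ENNReal.ofReal lamE) • (volume.restrict Ω) := by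
    rw [rhsMeasure, MeasureTheory.withDensity_zero_left, zero_add]
    have h1 : (fun y : Euc N =>
        (if c ≤ 0 then (⊤:ℝ≥0∞) else ENNReal.ofReal (c ^ (-γ))) * ENNReal.ofReal 1)
        = fun _ : Euc N => ENNReal.ofReal lamE := by
      funext y; rw [if_neg hcnot, hck]; simp
    rw [h1, withDensity_const]
  have hrint : ∀ φ : Euc N → ℝ,
      (∫ x, φ x ∂(rhsMeasure Ω (fun s => if s ≤ 0 then ⊤ else ENNReal.ofReal (lam / s ^ θ))
        (fun s => if s ≤ 0 then ⊤ else ENNReal.ofReal (s ^ (-γ))) (fun _ => 1)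
        (fun _ => c) (0 : Measure (Euc N)))) = lamE * ∫ x in Ω, φ x := by
    intro φ
    rw [hrhs, integral_smul_measure, ENNReal.toReal_ofReal hlamE0, smul_eq_mul]
  have hext : ∀ φ : Euc N → ℝ, IsTestOn Ω φ →
      ∫ x in Ω, (inner ℝ (ξ x) (gradient φ x) : ℝ) = lamE * ∫ x in Ω, φ x := by
    intro φ hφ
    rw [setIntegral_eq_integral_of_forall_compl_eq_zero (fun x hx => by
      have hfz : fderiv ℝ φ x = 0 := fderiv_zero_outside hφ.2.2 hx
      simp [gradient, hfz])]
    exact hdivξ φ ⟨hφ.1, hφ.2.1, subset_univ _⟩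
  refine ⟨?_, ?_, ⟨?_, ?_, ?_⟩, ?_, ?_, ?_, ?_, ?_, ?_, ?_, ?_, ?_, ?_⟩
  · exact Eventually.of_forall fun _ => hc.le
  · exact integrableOn_const hΩb.measure_lt_top.ne
  · simp
  · rfl
  · intro φ hφ i
    have hz : ∫ x in Ω, pd φ i x = 0 := by
      rw [setIntegral_eq_integral_of_forall_compl_eq_zero (fun x hx => by
        have hfz : fderiv ℝ φ x = 0 := fderiv_zero_outside hφ.2.2 hx
        simp [pd, hfz])]
      exact integral_fderiv_apply_eq_zero hφ.1 hφ.2.1 _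
    simp only [integral_zero_measure, neg_zero]
    rw [integral_const_mul, hz, mul_zero]
  · simp
  · intro K _ _; simp
  · intro K hK _
    have : (fun x : Euc N => ((if c ≤ 0 then (⊤:ℝ≥0∞)
        else ENNReal.ofReal (c ^ (-γ))).toReal) * (1:ℝ)) = fun _ : Euc N => lamE := by
      funext x; rw [if_neg hcnot, hck, ENNReal.toReal_ofReal hlamE0, mul_one]
    rw [this]
    exact integrableOn_const hK.measure_lt_top.ne
  · exact ae_restrict_of_ae hξbd
  · intro φ hφ
    rw [hrint φ]
    exact hext φ hφ
  · intro φ hφ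
    simp only [pRep_const, integral_zero_measure]
    rw [hrint fun x => c * φ x, integral_const_mul,
      integral_const_mul, hext φ hφ]
    ring
  · intro φ hφ
    rw [hrint φ]
    exact hnt φ hφ
  · exact Eventually.of_forall fun _ => by norm_num
  · refine Eventually.of_forall fun x => ?_
    have h0 : (fun r : ℝ => ⨍ y in Metric.ball x r ∩ Ω, |c - c|) = fun _ => (0:ℝ) := by
      funext r; simp
    rw [h0]
    exact tendsto_const_nhds
  · exact Eventually.of_forall fun x => by ring

end
end
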